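/- If a hermitian matrix F and a unit vector ψ satisfy Tr(|ψ⟩⟨ψ| [F,G]) = 0 for all hermitian matrices G, then [|ψ⟩⟨ψ|, F] = 0, i.e. ψ is an eigenvector of F. -/
import Mathlib


open Matrix

lemma trace_mul_conjTranspose_self_eq_zero' {n : ℕ} (A : Matrix (Fin n) (Fin n) ℂ)
    (h : (A * Aᴴ).trace = 0) : A = 0 := by
  have htr : ∑ i, ∑ j, Complex.normSq (A i j) = 0 := by
    have := h
    simp only [Matrix.trace, Matrix.diag, Matrix.mul_apply, Matrix.conjTranspose_apply] at this
    have : (↑(∑ i, ∑ j, Complex.normSq (A i j)) : ℂ) = 0 := by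
      rw [← this]
      push_cast
      refine Finset.sum_congr rfl fun i _ => Finset.sum_congr rfl fun j _ => ?_
      rw [Complex.normSq_eq_conj_mul_self]
      exact mul_comm _ _
    exact_mod_cast this
  ext i j
  have hnonneg : ∀ i ∈ (Finset.univ : Finset (Fin n)),
      0 ≤ ∑ j, Complex.normSq (A i j) :=
    fun i _ => Finset.sum_nonneg fun j _ => Complex.normSq_nonneg _
  have h1 := (Finset.sum_eq_zero_iff_of_nonneg hnonneg).mp htr i (Finset.mem_univ i)
  have h2 := (Finset.sum_eq_zero_iff_of_nonneg
      (fun j _ => Complex.normSq_nonneg (A i j))).mp h1 j (Finset.mem_univ j)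
  simpa using Complex.normSq_eq_zero.mp h2

/-- Nondegeneracy of the Fubini–Study form: if `Tr(|ψ⟩⟨ψ|[F,G]) = 0` for all
hermitian `G`, then `[|ψ⟩⟨ψ|, F] = 0`, i.e. `ψ` is an eigenvector of `F`. -/
theorem fubini_study_nondegenerate (d : ℕ) (ψ : Fin d → ℂ) (hψ : star ψ ⬝ᵥ ψ = 1)
    (F : Matrix (Fin d) (Fin d) ℂ) (hF : F = Fᴴ)
    (h : ∀ G : Matrix (Fin d) (Fin d) ℂ, G = Gᴴ →
      (vecMulVec ψ (star ψ) * (F * G - G * F)).trace = 0) :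
    vecMulVec ψ (star ψ) * F - F * vecMulVec ψ (star ψ) = 0 ∧
      ∃ c : ℂ, F *ᵥ ψ = c • ψ := by
  set ρ : Matrix (Fin d) (Fin d) ℂ := vecMulVec ψ (star ψ) with hρ
  have hρherm : ρ = ρᴴ := by
    ext i j
    simp [hρ, vecMulVec_apply, mul_comm]
  set C : Matrix (Fin d) (Fin d) ℂ := ρ * F - F * ρ with hC
  have hCanti : Cᴴ = -C := by
    simp [hC, Matrix.conjTranspose_sub, Matrix.conjTranspose_mul, ← hρherm, ← hF]
  have hGherm : (Complex.I • C) = (Complex.I • C)ᴴ := by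
    rw [Matrix.conjTranspose_smul, hCanti]
    simp
  have key := h (Complex.I • C) hGherm
  -- ρ * (F * G - G * F) with G = I•C
  have expand : (ρ * (F * (Complex.I • C) - (Complex.I • C) * F)).trace
      = Complex.I * (C * C).trace := by
    rw [Matrix.mul_smul, Matrix.smul_mul, ← smul_sub, Matrix.mul_smul, Matrix.trace_smul]
    have h2 : (ρ * (F * C - C * F)).trace = (C * C).trace := by
      rw [Matrix.mul_sub, Matrix.trace_sub, ← Matrix.mul_assoc, ← Matrix.mul_assoc,
        Matrix.trace_mul_cycle ρ C F, ← Matrix.trace_sub, ← Matrix.sub_mul, ← hC]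
    rw [h2, smul_eq_mul]
  have hCC : (C * C).trace = 0 := by
    have h3 : Complex.I * (C * C).trace = 0 := expand ▸ key
    exact (mul_eq_zero.mp h3).resolve_left Complex.I_ne_zero
  have hCzero : C = 0 := by
    apply trace_mul_conjTranspose_self_eq_zero'
    rw [hCanti, Matrix.mul_neg, Matrix.trace_neg, hCC, neg_zero]
  refine ⟨hCzero, ?_⟩
  -- ρ F ψ = F ρ ψ = F ψ, and ρ F ψ = (ψ* ⬝ Fψ) • ψ
  have hcomm : ρ * F = F * ρ := sub_eq_zero.mp hCzero
  have hρψ : ρ *ᵥ ψ = ψ := by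
    ext i
    simp [hρ, Matrix.mulVec, Matrix.vecMulVec_apply, dotProduct, mul_assoc, ← Finset.mul_sum]
    have h4 : ∑ j, (starRingEnd ℂ) (ψ j) * ψ j = 1 := hψ
    rw [h4, mul_one]
  refine ⟨star ψ ⬝ᵥ (F *ᵥ ψ), ?_⟩
  have h1 : ρ *ᵥ (F *ᵥ ψ) = F *ᵥ ψ := by
    rw [Matrix.mulVec_mulVec, hcomm, ← Matrix.mulVec_mulVec, hρψ]
  have h2 : ρ *ᵥ (F *ᵥ ψ) = (star ψ ⬝ᵥ (F *ᵥ ψ)) • ψ := by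
    ext i
    simp [hρ, Matrix.mulVec, Matrix.vecMulVec_apply, dotProduct, mul_assoc, ← Finset.mul_sum,
      smul_eq_mul]
    exact mul_comm _ _
  rw [← h2, h1]
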